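/- Let k ≥ r > i ≥ 1 be integers and let H be a k-partite r-graph. Then (|H| / C(k,r))^{1/r} ≤ (|∂_i H| / C(k,r-i))^{1/(r-i)}, where ∂_i H is the i-th shadow of H (the set of (r-i)-subsets contained in some edge) and C(a,b) is the binomial coefficient. -/

import Mathlib

open Finset


-- Generalized Hölder via weighted AM-GM
theorem holder_finset {ι β : Type*} (J : Finset ι) (S : Finset β) (x : ι → β → ℝ)
    (hJ : J.Nonempty) (hx : ∀ j ∈ J, ∀ b ∈ S, 0 ≤ x j b) :
    ∑ b ∈ S, ∏ j ∈ J, x j b ^ (1 / (J.card : ℝ)) ≤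
      ∏ j ∈ J, (∑ b ∈ S, x j b) ^ (1 / (J.card : ℝ)) := by
  have hn : (0:ℝ) < J.card := by exact_mod_cast Finset.card_pos.mpr hJ
  have hw : (1 / (J.card:ℝ)) ≠ 0 := by positivity
  by_cases hz : ∃ j ∈ J, ∑ b ∈ S, x j b = 0
  · obtain ⟨j, hj, hXj⟩ := hz
    have hzero : ∀ b ∈ S, x j b = 0 := by
      intro b hb
      have := (Finset.sum_eq_zero_iff_of_nonneg (fun b hb => hx j hj b hb)).mp hXj
      exact this b hb
    have hL : ∑ b ∈ S, ∏ j' ∈ J, x j' b ^ (1 / (J.card : ℝ)) = 0 := by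
      apply Finset.sum_eq_zero
      intro b hb
      apply Finset.prod_eq_zero hj
      rw [hzero b hb, Real.zero_rpow hw]
    rw [hL]
    apply Finset.prod_nonneg
    intro j' hj'
    exact Real.rpow_nonneg (Finset.sum_nonneg fun b hb => hx j' hj' b hb) _
  · push_neg at hz
    set w : ℝ := 1 / (J.card:ℝ) with hwdef
    have hX : ∀ j ∈ J, 0 < ∑ b ∈ S, x j b := by
      intro j hj
      exact lt_of_le_of_ne (Finset.sum_nonneg fun b hb => hx j hj b hb) (Ne.symm (hz j hj))
    have key : ∀ b ∈ S, ∏ j ∈ J, x j b ^ w ≤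
        (∑ j ∈ J, w * (x j b / (∑ b ∈ S, x j b))) * ∏ j ∈ J, (∑ b ∈ S, x j b) ^ w := by
      intro b hb
      have h1 : ∏ j ∈ J, x j b ^ w
          = (∏ j ∈ J, (x j b / (∑ b ∈ S, x j b)) ^ w) * ∏ j ∈ J, (∑ b ∈ S, x j b) ^ w := by
        rw [← Finset.prod_mul_distrib]
        apply Finset.prod_congr rfl
        intro j hj
        rw [← Real.mul_rpow (div_nonneg (hx j hj b hb) (le_of_lt (hX j hj))) (le_of_lt (hX j hj))]
        rw [div_mul_cancel₀ _ (ne_of_gt (hX j hj))]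
      rw [h1]
      apply mul_le_mul_of_nonneg_right
      · apply Real.geom_mean_le_arith_mean_weighted
        · intro j hj
          rw [hwdef]; positivity
        · rw [Finset.sum_const, hwdef, nsmul_eq_mul]
          field_simp
        · intro j hj
          exact div_nonneg (hx j hj b hb) (le_of_lt (hX j hj))
      · exact Finset.prod_nonneg fun j hj => Real.rpow_nonneg (le_of_lt (hX j hj)) _
    calc ∑ b ∈ S, ∏ j ∈ J, x j b ^ w
        ≤ ∑ b ∈ S, (∑ j ∈ J, w * (x j b / (∑ b ∈ S, x j b))) * ∏ j ∈ J, (∑ b ∈ S, x j b) ^ w :=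
          Finset.sum_le_sum key
      _ = (∑ b ∈ S, ∑ j ∈ J, w * (x j b / (∑ b ∈ S, x j b))) * ∏ j ∈ J, (∑ b ∈ S, x j b) ^ w := by
          rw [Finset.sum_mul]
      _ = 1 * ∏ j ∈ J, (∑ b ∈ S, x j b) ^ w := by
          congr 1
          rw [Finset.sum_comm]
          have : ∀ j ∈ J, ∑ b ∈ S, w * (x j b / (∑ b' ∈ S, x j b')) = w := by
            intro j hj
            rw [← Finset.mul_sum, ← Finset.sum_div, div_self (ne_of_gt (hX j hj)), mul_one]
          rw [Finset.sum_congr rfl this, Finset.sum_const, nsmul_eq_mul, hwdef]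
          field_simp
      _ = ∏ j ∈ J, (∑ b ∈ S, x j b) ^ w := one_mul _

-- superadditivity of geometric mean
theorem prod_rpow_add_le {ι : Type*} (J : Finset ι) (hJ : J.Nonempty) (u v : ι → ℝ)
    (hu : ∀ j ∈ J, 0 ≤ u j) (hv : ∀ j ∈ J, 0 ≤ v j) :
    ∏ j ∈ J, u j ^ (1 / (J.card : ℝ)) + ∏ j ∈ J, v j ^ (1 / (J.card : ℝ)) ≤
      ∏ j ∈ J, (u j + v j) ^ (1 / (J.card : ℝ)) := by
  have := holder_finset J (Finset.univ : Finset Bool) (fun j b => if b then u j else v j) hJ ?_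
  · simpa [Fintype.sum_bool, add_comm] using this
  · intro j hj b _
    cases b <;> simp [hu j hj, hv j hj]


namespace FFK

variable {α : Type*} [Fintype α] [DecidableEq α]

noncomputable def tF (n : ℕ) (g : Finset α → ℝ) (R : Finset α) : ℝ :=
  ∏ c ∈ R, g (R.erase c) ^ (1 / (n : ℝ))

noncomputable def FF (n : ℕ) (g : Finset α → ℝ) : ℝ :=
  ∑ R ∈ Finset.powersetCard (n + 1) (Finset.univ : Finset α), tF n g R

omit [Fintype α] in
theorem tF_def (n : ℕ) (g : Finset α → ℝ) (R : Finset α) :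
    tF n g R = ∏ c ∈ R, g (R.erase c) ^ (1 / (n : ℝ)) := rfl

omit [Fintype α] in
theorem tF_comp (n : ℕ) (g : Finset α → ℝ) (σ : Equiv.Perm α) (R : Finset α) :
    tF n (fun P => g (P.image σ)) R = tF n g (R.image σ) := by
  unfold tF
  rw [Finset.prod_image (fun x _ y _ h => σ.injective h)]
  apply Finset.prod_congr rfl
  intro c _
  simp only [Finset.image_erase σ.injective]

omit [Fintype α] in
theorem tF_nonneg (n : ℕ) (g : Finset α → ℝ) (hg : ∀ P, 0 ≤ g P) (R : Finset α) :
    0 ≤ tF n g R :=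
  Finset.prod_nonneg fun _ _ => Real.rpow_nonneg (hg _) _

theorem FF_comp (n : ℕ) (g : Finset α → ℝ) (σ : Equiv.Perm α) :
    FF n (fun P => g (P.image σ)) = FF n g := by
  unfold FF
  have h1 : ∀ R ∈ Finset.powersetCard (n+1) (Finset.univ : Finset α),
      tF n (fun P => g (P.image σ)) R = tF n g (R.image σ) := fun R _ => tF_comp n g σ R
  rw [Finset.sum_congr rfl h1]
  apply Finset.sum_nbij' (fun R => R.image σ) (fun R => R.image σ.symm)
  · intro R hR
    rw [Finset.mem_powersetCard_univ] at hR ⊢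
    rw [Finset.card_image_of_injective _ σ.injective, hR]
  · intro R hR
    rw [Finset.mem_powersetCard_univ] at hR ⊢
    rw [Finset.card_image_of_injective _ σ.symm.injective, hR]
  · intro R _
    rw [Finset.image_image]
    simp
  · intro R _
    rw [Finset.image_image]
    simp
  · intro R _
    rfl

omit [Fintype α] in
theorem swap_fix {a b : α} (P : Finset α) (hpa : a ∉ P) (hpb : b ∉ P) :
    P.image (Equiv.swap a b) = P := by
  have h : ∀ x ∈ P, Equiv.swap a b x = x := fun x hx =>
    Equiv.swap_apply_of_ne_of_ne (fun h => hpa (h ▸ hx)) (fun h => hpb (h ▸ hx))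
  rw [Finset.image_congr (fun x hx => h x hx)]
  exact Finset.image_id'

omit [Fintype α] in
theorem exchange_caseC (n : ℕ) (hn : 1 ≤ n) (g : Finset α → ℝ) (hg : ∀ P, 0 ≤ g P)
    (a b : α) (R : Finset α) (hR : R.card = n + 1)
    (ha : a ∈ R) (hb : b ∉ R) :
    tF n g R + tF n g (R.image (Equiv.swap a b)) ≤
      2 * tF n (fun P => (g P + g (P.image (Equiv.swap a b))) / 2) R := by
  have hn' : (0:ℝ) < (n:ℝ) := by exact_mod_cast hn
  set σ := Equiv.swap a b with hσ
  set w : ℝ := 1 / (n : ℝ) with hw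
  have hab : a ≠ b := fun h => hb (h ▸ ha)
  have hJcard : (R.erase a).card = n := by
    rw [Finset.card_erase_of_mem ha, hR]
    omega
  have hJne : (R.erase a).Nonempty := by
    rw [← Finset.card_pos, hJcard]; omega
  have hPAfix : (R.erase a).image σ = R.erase a :=
    swap_fix _ (Finset.notMem_erase a R) (fun h => hb (Finset.mem_of_mem_erase h))
  have e2 : tF n g (R.image σ)
      = g (R.erase a) ^ w * ∏ c ∈ R.erase a, g ((R.erase c).image σ) ^ w := by
    rw [← tF_comp, tF_def, ← Finset.mul_prod_erase R _ ha]
    simp only [hPAfix]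
    rfl
  have e1 : tF n g R = g (R.erase a) ^ w * ∏ c ∈ R.erase a, g (R.erase c) ^ w := by
    rw [tF_def, ← Finset.mul_prod_erase R _ ha]
  have e3 : tF n (fun P => (g P + g (P.image σ)) / 2) R
      = g (R.erase a) ^ w *
        ∏ c ∈ R.erase a, ((g (R.erase c) + g ((R.erase c).image σ)) / 2) ^ w := by
    rw [tF_def, ← Finset.mul_prod_erase R _ ha]
    simp only [hPAfix, add_self_div_two]
    rfl
  rw [e1, e2, e3]
  have hA : (0:ℝ) ≤ g (R.erase a) ^ w := Real.rpow_nonneg (hg _) _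
  have core : (∏ c ∈ R.erase a, g (R.erase c) ^ w)
      + (∏ c ∈ R.erase a, g ((R.erase c).image σ) ^ w)
      ≤ 2 * ∏ c ∈ R.erase a, ((g (R.erase c) + g ((R.erase c).image σ)) / 2) ^ w := by
    have h2W : ∏ c ∈ R.erase a, ((g (R.erase c) + g ((R.erase c).image σ)) / 2) ^ w
        = (∏ c ∈ R.erase a, (g (R.erase c) + g ((R.erase c).image σ)) ^ w) / 2 := by
      have hstep : ∀ c ∈ R.erase a, ((g (R.erase c) + g ((R.erase c).image σ)) / 2) ^ w
          = (g (R.erase c) + g ((R.erase c).image σ)) ^ w / (2:ℝ) ^ w := fun c _ =>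
        Real.div_rpow (add_nonneg (hg _) (hg _)) (by norm_num : (0:ℝ) ≤ 2) w
      rw [Finset.prod_congr rfl hstep, Finset.prod_div_distrib, Finset.prod_const, hJcard]
      congr 1
      rw [← Real.rpow_natCast ((2:ℝ) ^ w) n, ← Real.rpow_mul (by norm_num : (0:ℝ) ≤ 2)]
      rw [hw]
      rw [show (1 / (n:ℝ)) * (n:ℝ) = 1 by field_simp]
      exact Real.rpow_one 2
    rw [h2W, mul_div_cancel₀ _ (by norm_num : (2:ℝ) ≠ 0)]
    have := prod_rpow_add_le (R.erase a) hJne (fun c => g (R.erase c))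
      (fun c => g ((R.erase c).image σ)) (fun c _ => hg _) (fun c _ => hg _)
    rw [hJcard] at this
    exact this
  calc g (R.erase a) ^ w * (∏ c ∈ R.erase a, g (R.erase c) ^ w)
      + g (R.erase a) ^ w * (∏ c ∈ R.erase a, g ((R.erase c).image σ) ^ w)
      = g (R.erase a) ^ w * ((∏ c ∈ R.erase a, g (R.erase c) ^ w)
        + (∏ c ∈ R.erase a, g ((R.erase c).image σ) ^ w)) := by ring
    _ ≤ g (R.erase a) ^ w *
        (2 * ∏ c ∈ R.erase a, ((g (R.erase c) + g ((R.erase c).image σ)) / 2) ^ w) :=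
        mul_le_mul_of_nonneg_left core hA
    _ = 2 * (g (R.erase a) ^ w *
        ∏ c ∈ R.erase a, ((g (R.erase c) + g ((R.erase c).image σ)) / 2) ^ w) := by ring

omit [Fintype α] in
theorem exchange_R (n : ℕ) (hn : 1 ≤ n) (g : Finset α → ℝ) (hg : ∀ P, 0 ≤ g P)
    (a b : α) (hab : a ≠ b) (R : Finset α) (hR : R.card = n + 1) :
    tF n g R + tF n g (R.image (Equiv.swap a b)) ≤
      2 * tF n (fun P => (g P + g (P.image (Equiv.swap a b))) / 2) R := by
  by_cases ha : a ∈ R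
  · by_cases hb : b ∈ R
    · -- both in R
      set σ := Equiv.swap a b with hσ
      have hRfix : R.image σ = R := by
        apply Finset.eq_of_subset_of_card_le
        · intro x hx
          obtain ⟨y, hy, rfl⟩ := Finset.mem_image.mp hx
          rcases eq_or_ne y a with rfl | hya
          · rwa [Equiv.swap_apply_left]
          rcases eq_or_ne y b with rfl | hyb
          · rwa [Equiv.swap_apply_right]
          · rwa [Equiv.swap_apply_of_ne_of_ne hya hyb]
        · rw [Finset.card_image_of_injective _ σ.injective]
      rw [hRfix]
      have key : tF n g R ≤ tF n (fun P => (g P + g (P.image σ)) / 2) R := by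
        set e : ℝ := 1 / (2 * (n : ℝ)) with he
        have hne : (n:ℝ) ≠ 0 := by
          have : (0:ℝ) < (n:ℝ) := by exact_mod_cast hn
          linarith
        have hsplit : tF n g R
            = ∏ c ∈ R, (g (R.erase c) ^ e * g (R.erase c) ^ e) := by
          rw [tF_def]
          apply Finset.prod_congr rfl
          intro c _
          rw [← Real.rpow_add' (hg _) (by rw [he]; field_simp; exact div_ne_zero (by norm_num) (mul_ne_zero two_ne_zero hne))]
          congr 1
          rw [he]; field_simp; ring
        have hreindex : ∏ c ∈ R, g (R.erase c) ^ e
            = ∏ c ∈ R, g ((R.erase c).image σ) ^ e := by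
          have h1 : ∀ c ∈ R, g ((R.erase c).image σ) ^ e = g (R.erase (σ c)) ^ e := by
            intro c _
            rw [Finset.image_erase σ.injective, hRfix]
          rw [Finset.prod_congr rfl h1]
          have h2 := Finset.prod_image (s := R) (g := fun x => σ x)
            (f := fun x => g (R.erase x) ^ e) (fun x _ y _ h => σ.injective h)
          rw [hRfix] at h2
          exact h2
        have h3 : tF n g R = ∏ c ∈ R, (g (R.erase c) * g ((R.erase c).image σ)) ^ e := by
          rw [hsplit, Finset.prod_mul_distrib]
          nth_rewrite 2 [hreindex]
          rw [← Finset.prod_mul_distrib]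
          apply Finset.prod_congr rfl
          intro c _
          rw [Real.mul_rpow (hg _) (hg _)]
        rw [h3, tF_def]
        apply Finset.prod_le_prod
        · intro c _
          exact Real.rpow_nonneg (mul_nonneg (hg _) (hg _)) _
        · intro c _
          have hxy : g (R.erase c) * g ((R.erase c).image σ)
              ≤ ((g (R.erase c) + g ((R.erase c).image σ)) / 2) ^ (2:ℕ) := by
            have := sq_nonneg (g (R.erase c) - g ((R.erase c).image σ))
            nlinarith
          calc (g (R.erase c) * g ((R.erase c).image σ)) ^ e
              ≤ (((g (R.erase c) + g ((R.erase c).image σ)) / 2) ^ (2:ℕ)) ^ e :=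
                Real.rpow_le_rpow (mul_nonneg (hg _) (hg _)) hxy (by rw [he]; apply div_nonneg <;> positivity)
            _ = ((g (R.erase c) + g ((R.erase c).image σ)) / 2) ^ (1 / (n:ℝ)) := by
                rw [← Real.rpow_natCast ((g (R.erase c) + g ((R.erase c).image σ)) / 2) 2,
                  ← Real.rpow_mul (div_nonneg (add_nonneg (hg _) (hg _)) (by norm_num))]
                congr 1
                rw [he]
                push_cast
                field_simp
      linarith [key]
    · exact exchange_caseC n hn g hg a b R hR ha hb
  · by_cases hb : b ∈ R
    · have h := exchange_caseC n hn g hg b a R hR hb ha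
      rw [Equiv.swap_comm b a] at h
      exact h
    · have hRfix : R.image (Equiv.swap a b) = R := swap_fix R ha hb
      have heq : tF n (fun P => (g P + g (P.image (Equiv.swap a b))) / 2) R = tF n g R := by
        rw [tF_def, tF_def]
        apply Finset.prod_congr rfl
        intro c hc
        have : (R.erase c).image (Equiv.swap a b) = R.erase c :=
          swap_fix _ (fun h => ha (Finset.mem_of_mem_erase h))
            (fun h => hb (Finset.mem_of_mem_erase h))
        simp only [this, add_self_div_two]
      rw [hRfix, heq]
      linarith [tF_nonneg n g hg R]

theorem FF_exchange (n : ℕ) (hn : 1 ≤ n) (g : Finset α → ℝ) (hg : ∀ P, 0 ≤ g P)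
    (a b : α) (hab : a ≠ b) :
    FF n g ≤ FF n (fun P => (g P + g (P.image (Equiv.swap a b))) / 2) := by
  have key : FF n g + FF n (fun P => g (P.image (Equiv.swap a b)))
      ≤ 2 * FF n (fun P => (g P + g (P.image (Equiv.swap a b))) / 2) := by
    unfold FF
    rw [← Finset.sum_add_distrib, Finset.mul_sum]
    apply Finset.sum_le_sum
    intro R hR
    rw [tF_comp]
    exact exchange_R n hn g hg a b hab R (Finset.mem_powersetCard_univ.mp hR)
  rw [FF_comp] at key
  linarith

noncomputable def QQ (g : Finset α → ℝ) : ℝ := ∑ P : Finset α, (g P) ^ 2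

def Kset (n : ℕ) : Set (Finset α → ℝ) :=
  (Set.pi Set.univ fun _ : Finset α => Set.Icc (0:ℝ) 1) ∩
    ({g | ∀ P : Finset α, P.card ≠ n → g P = 0} ∩
     {g | ∑ P ∈ Finset.powersetCard n (Finset.univ : Finset α), g P = 1})

theorem Kset_nonneg {n : ℕ} {g : Finset α → ℝ} (hg : g ∈ Kset n) : ∀ P, 0 ≤ g P :=
  fun P => (hg.1 P (Set.mem_univ P)).1

theorem isCompact_Kset (n : ℕ) : IsCompact (Kset (α := α) n) := by
  apply IsCompact.of_isClosed_subset
    (isCompact_univ_pi fun _ : Finset α => isCompact_Icc (a := (0:ℝ)) (b := 1))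
  · apply IsClosed.inter
    · exact isClosed_set_pi fun _ _ => isClosed_Icc
    · apply IsClosed.inter
      · have : {g : Finset α → ℝ | ∀ P : Finset α, P.card ≠ n → g P = 0}
            = ⋂ (P : Finset α), ⋂ (_ : P.card ≠ n), (fun g : Finset α → ℝ => g P) ⁻¹' {0} := by
          ext g; simp [Set.mem_iInter]
        rw [this]
        exact isClosed_iInter fun P => isClosed_iInter fun _ =>
          (isClosed_singleton).preimage (continuous_apply P)
      · have : {g : Finset α → ℝ | ∑ P ∈ Finset.powersetCard n (Finset.univ : Finset α), g P = 1}
            = (fun g : Finset α → ℝ =>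
                ∑ P ∈ Finset.powersetCard n (Finset.univ : Finset α), g P) ⁻¹' {1} := by
          ext g; simp
        rw [this]
        exact (isClosed_singleton).preimage (continuous_finset_sum _ fun P _ => continuous_apply P)
  · exact fun g hg => hg.1

theorem continuous_FF (n : ℕ) : Continuous (FF (α := α) n) := by
  have hc : Continuous fun x : ℝ => x ^ (1/(n:ℝ)) := by
    rw [continuous_iff_continuousAt]
    intro x
    exact Real.continuousAt_rpow_const x _ (Or.inr (by positivity))
  unfold FF tF
  apply continuous_finset_sum
  intro R _
  apply continuous_finset_prod
  intro c _
  exact hc.comp (continuous_apply (R.erase c))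

theorem continuous_QQ : Continuous (QQ (α := α)) := by
  unfold QQ
  exact continuous_finset_sum _ fun P _ => (continuous_apply P).pow 2

theorem sum_comp_image (s : ℕ) (F : Finset α → ℝ) (σ : Equiv.Perm α) :
    ∑ P ∈ Finset.powersetCard s (Finset.univ : Finset α), F (P.image σ)
      = ∑ P ∈ Finset.powersetCard s (Finset.univ : Finset α), F P := by
  apply Finset.sum_nbij' (fun R => R.image σ) (fun R => R.image σ.symm)
  · intro R hR
    rw [Finset.mem_powersetCard_univ] at hR ⊢
    rw [Finset.card_image_of_injective _ σ.injective, hR]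
  · intro R hR
    rw [Finset.mem_powersetCard_univ] at hR ⊢
    rw [Finset.card_image_of_injective _ σ.symm.injective, hR]
  · intro R _
    rw [Finset.image_image]
    simp
  · intro R _
    rw [Finset.image_image]
    simp
  · intro R _
    rfl

theorem QQ_comp (g : Finset α → ℝ) (σ : Equiv.Perm α) :
    ∑ P : Finset α, (g (P.image σ)) ^ 2 = QQ g := by
  unfold QQ
  apply Finset.sum_nbij' (fun R => R.image σ) (fun R => R.image σ.symm)
  · intro R _; exact Finset.mem_univ _
  · intro R _; exact Finset.mem_univ _
  · intro R _
    rw [Finset.image_image]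
    simp
  · intro R _
    rw [Finset.image_image]
    simp
  · intro R _
    rfl

theorem exchange_mem_Kset {n : ℕ} {g : Finset α → ℝ} (hg : g ∈ Kset n) (a b : α) :
    (fun P : Finset α => (g P + g (P.image (Equiv.swap a b))) / 2) ∈ Kset n := by
  obtain ⟨h1, h2, h3⟩ := hg
  refine ⟨?_, ?_, ?_⟩
  · intro P _
    have ha1 := h1 P (Set.mem_univ P)
    have ha2 := h1 (P.image (Equiv.swap a b)) (Set.mem_univ _)
    constructor
    · have := ha1.1; have := ha2.1
      dsimp only
      linarith [ha1.1, ha2.1]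
    · dsimp only
      linarith [ha1.2, ha2.2]
  · intro P hP
    have hcard : (P.image (Equiv.swap a b)).card ≠ n := by
      rwa [Finset.card_image_of_injective _ (Equiv.swap a b).injective]
    dsimp only
    rw [h2 P hP, h2 _ hcard]
    norm_num
  · show ∑ P ∈ Finset.powersetCard n (Finset.univ : Finset α),
        (g P + g (P.image (Equiv.swap a b))) / 2 = 1
    rw [← Finset.sum_div, Finset.sum_add_distrib, sum_comp_image n g (Equiv.swap a b), h3]
    norm_num

omit [Fintype α] in
theorem image_swap_eq_insert_erase (P : Finset α) (a b : α) (haP : a ∈ P) (hbP : b ∉ P) :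
    P.image (Equiv.swap a b) = insert b (P.erase a) := by
  ext x
  simp only [Finset.mem_image, Finset.mem_insert, Finset.mem_erase]
  constructor
  · rintro ⟨y, hy, rfl⟩
    rcases eq_or_ne y a with rfl | hya
    · left; rw [Equiv.swap_apply_left]
    rcases eq_or_ne y b with rfl | hyb
    · exact absurd hy hbP
    · right
      rw [Equiv.swap_apply_of_ne_of_ne hya hyb]
      exact ⟨hya, hy⟩
  · rintro (rfl | ⟨hxa, hxP⟩)
    · exact ⟨a, haP, Equiv.swap_apply_left _ _⟩
    · exact ⟨x, hxP, Equiv.swap_apply_of_ne_of_ne hxa (fun h => hbP (h ▸ hxP))⟩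

omit [Fintype α] in
theorem invariant_const {n : ℕ} (g : Finset α → ℝ)
    (hinv : ∀ a b : α, a ≠ b → ∀ P : Finset α, g (P.image (Equiv.swap a b)) = g P) :
    ∀ P P' : Finset α, P.card = n → P'.card = n → g P = g P' := by
  suffices key : ∀ d (P P' : Finset α), P.card = n → P'.card = n → (P \ P').card = d →
      g P = g P' by
    intro P P' h h'
    exact key _ P P' h h' rfl
  intro d
  induction d using Nat.strong_induction_on with
  | _ d ih =>
    intro P P' hP hP' hd
    rcases Nat.eq_zero_or_pos d with rfl | hdpos
    · have hsub : P ⊆ P' := by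
        rw [← Finset.sdiff_eq_empty_iff_subset]
        exact Finset.card_eq_zero.mp hd
      rw [Finset.eq_of_subset_of_card_le hsub (le_of_eq (hP'.trans hP.symm))]
    · have hne : (P \ P').Nonempty := Finset.card_pos.mp (by omega)
      obtain ⟨a, haPP'⟩ := hne
      have haP : a ∈ P := (Finset.mem_sdiff.mp haPP').1
      have haP' : a ∉ P' := (Finset.mem_sdiff.mp haPP').2
      have hcard2 : (P' \ P).card = d := by
        have h1 := Finset.card_sdiff_add_card_inter P P'
        have h2 := Finset.card_sdiff_add_card_inter P' P
        rw [Finset.inter_comm] at h2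
        omega
      have hne' : (P' \ P).Nonempty := Finset.card_pos.mp (by omega)
      obtain ⟨b, hbPP'⟩ := hne'
      have hbP' : b ∈ P' := (Finset.mem_sdiff.mp hbPP').1
      have hbP : b ∉ P := (Finset.mem_sdiff.mp hbPP').2
      have hab : a ≠ b := fun h => hbP (h ▸ haP)
      have hPim : P.image (Equiv.swap a b) = insert b (P.erase a) :=
        image_swap_eq_insert_erase P a b haP hbP
      have hnpos : 1 ≤ n := by
        have := Finset.card_pos.mpr ⟨a, haP⟩
        omega
      have hcardim : (insert b (P.erase a)).card = n := by
        rw [Finset.card_insert_of_notMem (fun h => hbP (Finset.mem_of_mem_erase h)),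
          Finset.card_erase_of_mem haP, hP]
        omega
      have hsd : ((insert b (P.erase a)) \ P').card = d - 1 := by
        rw [Finset.insert_sdiff_of_mem _ hbP', Finset.erase_sdiff_comm,
          Finset.card_erase_of_mem haPP', hd]
      have hstep : g P = g (insert b (P.erase a)) := by
        rw [← hPim, hinv a b hab P]
      rw [hstep]
      exact ih (d - 1) (by omega) _ P' hcardim hP' hsd

theorem FF_le_on_Kset (n : ℕ) (hn : 1 ≤ n) (hcard : n + 1 ≤ Fintype.card α) :
    ∀ g ∈ Kset (α := α) n, FF n g ≤ ((Fintype.card α).choose (n+1) : ℝ) *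
      ((1:ℝ) / ((Fintype.card α).choose n : ℝ)) ^ (((n:ℝ)+1)/(n:ℝ)) := by
  have hD : (Finset.powersetCard n (Finset.univ : Finset α)).card
      = (Fintype.card α).choose n := by
    rw [Finset.card_powersetCard, Finset.card_univ]
  have hNpos : 0 < (Fintype.card α).choose n := Nat.choose_pos (by omega)
  have hNpos' : (0:ℝ) < ((Fintype.card α).choose n : ℝ) := by exact_mod_cast hNpos
  have hKne : (Kset (α := α) n).Nonempty := by
    refine ⟨fun P => if P.card = n then 1 / ((Fintype.card α).choose n : ℝ) else 0, ?_, ?_, ?_⟩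
    · intro P _
      dsimp only
      split
      · refine ⟨by positivity, ?_⟩
        rw [div_le_one hNpos']
        exact_mod_cast hNpos
      · exact ⟨le_rfl, zero_le_one⟩
    · intro P hP
      simp only [if_neg hP]
    · show (∑ P ∈ Finset.powersetCard n (Finset.univ : Finset α),
        if P.card = n then 1 / (((Fintype.card α).choose n : ℕ) : ℝ) else 0) = 1
      rw [Finset.sum_congr rfl
        (fun P hP => if_pos (Finset.mem_powersetCard_univ.mp hP)),
        Finset.sum_const, hD, nsmul_eq_mul]
      field_simp
  obtain ⟨gmax, hgmaxK, hgmaxMax⟩ :=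
    (isCompact_Kset n).exists_isMaxOn hKne (continuous_FF n).continuousOn
  set Mset : Set (Finset α → ℝ) := Kset n ∩ {h | FF n h = FF n gmax} with hMdef
  have hMcompact : IsCompact Mset :=
    (isCompact_Kset n).inter_right
      ((isClosed_singleton (x := FF n gmax)).preimage (continuous_FF n))
  have hMne : Mset.Nonempty := ⟨gmax, hgmaxK, rfl⟩
  obtain ⟨g₀, hg₀M, hg₀Min⟩ := hMcompact.exists_isMinOn hMne continuous_QQ.continuousOn
  have hg₀K : g₀ ∈ Kset n := hg₀M.1
  have hg₀max : FF n g₀ = FF n gmax := hg₀M.2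
  have hg₀nonneg := Kset_nonneg hg₀K
  have hinv : ∀ a b : α, a ≠ b → ∀ P : Finset α, g₀ (P.image (Equiv.swap a b)) = g₀ P := by
    intro a b hab
    by_contra hne
    push_neg at hne
    obtain ⟨P₀, hP₀⟩ := hne
    set m := fun P : Finset α => (g₀ P + g₀ (P.image (Equiv.swap a b))) / 2 with hm
    have hmK : m ∈ Kset n := exchange_mem_Kset hg₀K a b
    have hFFm : FF n g₀ ≤ FF n m := FF_exchange n hn g₀ hg₀nonneg a b hab
    have hFFm' : FF n m ≤ FF n gmax := hgmaxMax hmK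
    have hmM : m ∈ Mset := ⟨hmK, le_antisymm hFFm' (hg₀max ▸ hFFm)⟩
    have hQle : QQ g₀ ≤ QQ m := hg₀Min hmM
    have hQlt : QQ m < QQ g₀ := by
      have hsum : QQ g₀ =
          ∑ P : Finset α, ((g₀ P)^2 + (g₀ (P.image (Equiv.swap a b)))^2)/2 := by
        rw [← Finset.sum_div, Finset.sum_add_distrib, QQ_comp g₀ (Equiv.swap a b)]
        unfold QQ
        ring
      rw [hsum]
      apply Finset.sum_lt_sum
      · intro P _
        show ((g₀ P + g₀ (P.image (Equiv.swap a b))) / 2) ^ 2 ≤ _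
        nlinarith [sq_nonneg (g₀ P - g₀ (P.image (Equiv.swap a b)))]
      · refine ⟨P₀, Finset.mem_univ _, ?_⟩
        show ((g₀ P₀ + g₀ (P₀.image (Equiv.swap a b))) / 2) ^ 2 < _
        have hpos : 0 < (g₀ P₀ - g₀ (P₀.image (Equiv.swap a b)))^2 := by
          apply sq_pos_of_ne_zero
          intro h
          exact hP₀ (by linarith [sub_eq_zero.mp h])
        nlinarith
    linarith
  have hconst := invariant_const (n := n) g₀ hinv
  obtain ⟨P₀, hP₀D⟩ : (Finset.powersetCard n (Finset.univ : Finset α)).Nonempty := by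
    rw [← Finset.card_pos, hD]
    exact hNpos
  have hval : ∀ P : Finset α, P.card = n → g₀ P = g₀ P₀ :=
    fun P hP => hconst P P₀ hP (Finset.mem_powersetCard_univ.mp hP₀D)
  have hsum1 : ((Fintype.card α).choose n : ℝ) * g₀ P₀ = 1 := by
    have h3 := hg₀K.2.2
    simp only [Set.mem_setOf_eq] at h3
    rw [Finset.sum_congr rfl
      (fun P hP => hval P (Finset.mem_powersetCard_univ.mp hP))] at h3
    rw [Finset.sum_const, hD, nsmul_eq_mul] at h3
    exact h3
  have hc₀ : g₀ P₀ = 1 / ((Fintype.card α).choose n : ℝ) := by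
    field_simp at hsum1 ⊢
    linarith
  have hFFg₀ : FF n g₀ = ((Fintype.card α).choose (n+1) : ℝ) *
      ((1:ℝ) / ((Fintype.card α).choose n : ℝ)) ^ (((n:ℝ)+1)/(n:ℝ)) := by
    unfold FF
    have hterm : ∀ R ∈ Finset.powersetCard (n+1) (Finset.univ : Finset α),
        tF n g₀ R = ((1 / ((Fintype.card α).choose n : ℝ)) ^ ((1:ℝ)/(n:ℝ))) ^ (n+1) := by
      intro R hR
      have hRcard := Finset.mem_powersetCard_univ.mp hR
      rw [tF_def]
      rw [Finset.prod_congr rfl (fun c hc => by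
        rw [hval _ (by rw [Finset.card_erase_of_mem hc, hRcard]; omega), hc₀]),
        Finset.prod_const, hRcard]
    rw [Finset.sum_congr rfl hterm, Finset.sum_const, Finset.card_powersetCard,
      Finset.card_univ, nsmul_eq_mul]
    congr 1
    rw [← Real.rpow_natCast ((1 / ((Fintype.card α).choose n : ℝ)) ^ ((1:ℝ)/(n:ℝ))) (n+1),
      ← Real.rpow_mul (by positivity)]
    congr 1
    push_cast
    have hnne : (n:ℝ) ≠ 0 := by
      have : (0:ℝ) < (n:ℝ) := by exact_mod_cast hn
      linarith
    field_simp
  intro g hgK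
  calc FF n g ≤ FF n gmax := hgmaxMax hgK
    _ = FF n g₀ := hg₀max.symm
    _ = _ := hFFg₀

theorem M_ineq (n : ℕ) (hn : 1 ≤ n) (hcard : n + 1 ≤ Fintype.card α)
    (g : Finset α → ℝ) (hg : ∀ P, 0 ≤ g P) (hsupp : ∀ P : Finset α, P.card ≠ n → g P = 0) :
    FF n g ≤ ((Fintype.card α).choose (n+1) : ℝ) *
      ((∑ P ∈ Finset.powersetCard n (Finset.univ : Finset α), g P)
        / ((Fintype.card α).choose n : ℝ)) ^ (((n:ℝ)+1)/(n:ℝ)) := by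
  have hnR : (0:ℝ) < (n:ℝ) := by exact_mod_cast hn
  have hw0 : (1:ℝ)/(n:ℝ) ≠ 0 := by positivity
  have hp0 : (0:ℝ) < ((n:ℝ)+1)/(n:ℝ) := by positivity
  set T := ∑ P ∈ Finset.powersetCard n (Finset.univ : Finset α), g P with hT
  have hT0 : 0 ≤ T := Finset.sum_nonneg fun P _ => hg P
  rcases eq_or_lt_of_le hT0 with hTz | hTpos
  · have hg0 : ∀ P : Finset α, g P = 0 := by
      intro P
      by_cases hPc : P.card = n
      · exact (Finset.sum_eq_zero_iff_of_nonneg (fun P _ => hg P)).mp hTz.symm P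
          (Finset.mem_powersetCard_univ.mpr hPc)
      · exact hsupp P hPc
    have hFF0 : FF n g = 0 := by
      unfold FF
      apply Finset.sum_eq_zero
      intro R hR
      rw [tF_def]
      have hRne : R.Nonempty := Finset.card_pos.mp
        (by rw [Finset.mem_powersetCard_univ.mp hR]; omega)
      obtain ⟨c, hc⟩ := hRne
      apply Finset.prod_eq_zero hc
      rw [hg0, Real.zero_rpow hw0]
    rw [hFF0, ← hTz, zero_div, Real.zero_rpow (ne_of_gt hp0), mul_zero]
  · set g' := fun P => g P / T with hg'
    have hg'K : g' ∈ Kset n := by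
      refine ⟨?_, ?_, ?_⟩
      · intro P _
        refine ⟨div_nonneg (hg P) hT0, ?_⟩
        show g P / T ≤ 1
        rw [div_le_one hTpos]
        by_cases hPc : P.card = n
        · exact Finset.single_le_sum (fun Q _ => hg Q)
            (Finset.mem_powersetCard_univ.mpr hPc)
        · rw [hsupp P hPc]
          exact hT0
      · intro P hP
        show g P / T = 0
        rw [hsupp P hP, zero_div]
      · show ∑ P ∈ Finset.powersetCard n (Finset.univ : Finset α), g P / T = 1
        rw [← Finset.sum_div, ← hT, div_self (ne_of_gt hTpos)]
    have hbound := FF_le_on_Kset n hn hcard g' hg'K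
    have hper : ∀ R ∈ Finset.powersetCard (n+1) (Finset.univ : Finset α),
        tF n g R = T ^ (((n:ℝ)+1)/(n:ℝ)) * tF n g' R := by
      intro R hR
      have hRcard := Finset.mem_powersetCard_univ.mp hR
      rw [tF_def, tF_def]
      have hstep : ∀ c ∈ R, (g' (R.erase c)) ^ ((1:ℝ)/(n:ℝ))
          = g (R.erase c) ^ ((1:ℝ)/(n:ℝ)) * (T⁻¹) ^ ((1:ℝ)/(n:ℝ)) := by
        intro c _
        show (g (R.erase c) / T) ^ ((1:ℝ)/(n:ℝ)) = _
        rw [div_eq_mul_inv, Real.mul_rpow (hg _) (by positivity)]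
      rw [Finset.prod_congr rfl hstep, Finset.prod_mul_distrib, Finset.prod_const, hRcard]
      have hexp : (1:ℝ)/(n:ℝ) * (((n+1 : ℕ)) : ℝ) = ((n:ℝ)+1)/(n:ℝ) := by
        push_cast
        field_simp
      rw [← Real.rpow_natCast ((T⁻¹) ^ ((1:ℝ)/(n:ℝ))) (n+1),
        ← Real.rpow_mul (by positivity : (0:ℝ) ≤ T⁻¹),
        hexp, Real.inv_rpow (le_of_lt hTpos)]
      have hTp : (0:ℝ) < T ^ (((n:ℝ)+1)/(n:ℝ)) := Real.rpow_pos_of_pos hTpos _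
      field_simp
    have hFFscale : FF n g = T ^ (((n:ℝ)+1)/(n:ℝ)) * FF n g' := by
      unfold FF
      rw [Finset.mul_sum]
      exact Finset.sum_congr rfl hper
    rw [hFFscale]
    have hTpnn : (0:ℝ) ≤ T ^ (((n:ℝ)+1)/(n:ℝ)) := le_of_lt (Real.rpow_pos_of_pos hTpos _)
    calc T ^ (((n:ℝ)+1)/(n:ℝ)) * FF n g'
        ≤ T ^ (((n:ℝ)+1)/(n:ℝ)) * (((Fintype.card α).choose (n+1) : ℝ) *
          ((1:ℝ) / ((Fintype.card α).choose n : ℝ)) ^ (((n:ℝ)+1)/(n:ℝ))) :=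
          mul_le_mul_of_nonneg_left hbound hTpnn
      _ = ((Fintype.card α).choose (n+1) : ℝ) *
          (T ^ (((n:ℝ)+1)/(n:ℝ)) * ((1:ℝ) / ((Fintype.card α).choose n : ℝ)) ^ (((n:ℝ)+1)/(n:ℝ))) := by
          ring
      _ = ((Fintype.card α).choose (n+1) : ℝ) *
          (T / ((Fintype.card α).choose n : ℝ)) ^ (((n:ℝ)+1)/(n:ℝ)) := by
          rw [← Real.mul_rpow hT0 (by positivity), mul_one_div]
  



section LW

variable {V γ : Type*} [DecidableEq V] [DecidableEq γ]

def prj (φ : V → γ) (c : γ) (G : Finset (Finset V)) : Finset (Finset V) :=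
  G.image fun E => E.filter fun v => φ v ≠ c

theorem rainbow_card_filter (φ : V → γ) {E : Finset V} {R : Finset γ} (himg : E.image φ = R)
    (hcards : E.card = R.card) {c : γ} (hc : c ∈ R) :
    (E.filter fun v => φ v ≠ c).card + 1 = E.card := by
  have hinj : Set.InjOn φ (E : Set V) := by
    apply Finset.injOn_of_card_image_eq
    rw [himg, hcards]
  obtain ⟨v₀, hv₀E, hv₀⟩ : ∃ v ∈ E, φ v = c := by
    rw [← himg] at hc
    obtain ⟨v, hv, hveq⟩ := Finset.mem_image.mp hc
    exact ⟨v, hv, hveq⟩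
  have hfil : E.filter (fun v => φ v = c) = {v₀} := by
    ext v
    simp only [Finset.mem_filter, Finset.mem_singleton]
    constructor
    · rintro ⟨hvE, hvc⟩
      exact hinj hvE hv₀E (by rw [hvc, hv₀])
    · rintro rfl
      exact ⟨hv₀E, hv₀⟩
  have h2 := Finset.card_filter_add_card_filter_not (s := E) (p := fun v => φ v = c)
  rw [hfil] at h2
  simp only [Finset.card_singleton, ne_eq] at h2 ⊢
  omega

theorem rainbow_image_filter (φ : V → γ) {E : Finset V} {R : Finset γ} (himg : E.image φ = R)
    {c : γ} :
    (E.filter fun v => φ v ≠ c).image φ = R.erase c := by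
  ext c'
  simp only [Finset.mem_image, Finset.mem_filter, Finset.mem_erase]
  constructor
  · rintro ⟨v, ⟨hvE, hvne⟩, rfl⟩
    exact ⟨hvne, by rw [← himg]; exact Finset.mem_image_of_mem φ hvE⟩
  · rintro ⟨hc'ne, hc'R⟩
    rw [← himg] at hc'R
    obtain ⟨v, hvE, rfl⟩ := Finset.mem_image.mp hc'R
    exact ⟨v, ⟨hvE, fun h => hc'ne h⟩, rfl⟩

theorem loomis_whitney (φ : V → γ) (n : ℕ) (hn : 1 ≤ n) :
    ∀ (R : Finset γ) (G : Finset (Finset V)), R.card = n + 1 →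
      (∀ E ∈ G, E.image φ = R ∧ E.card = n + 1) →
      (G.card : ℝ) ≤ ∏ c ∈ R, ((prj φ c G).card : ℝ) ^ ((1:ℝ)/(n:ℝ)) := by
  induction n, hn using Nat.le_induction with
  | base =>
    intro R G hRcard hG
    obtain ⟨c₁, c₂, hc12, rfl⟩ := Finset.card_eq_two.mp hRcard
    rw [Finset.prod_pair hc12]
    norm_num
    have hcardle : G.card ≤ (prj φ c₁ G).card * (prj φ c₂ G).card := by
      rw [← Finset.card_product]
      apply Finset.card_le_card_of_injOn
        (fun E => (E.filter fun v => φ v ≠ c₁, E.filter fun v => φ v ≠ c₂))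
      · intro E hE
        rw [Finset.mem_coe, Finset.mem_product]
        exact ⟨Finset.mem_image_of_mem _ hE, Finset.mem_image_of_mem _ hE⟩
      · intro E₁ hE₁ E₂ hE₂ heq
        have hun : ∀ E ∈ G, (E.filter fun v => φ v ≠ c₁) ∪ (E.filter fun v => φ v ≠ c₂) = E := by
          intro E hE
          ext v
          simp only [Finset.mem_union, Finset.mem_filter]
          constructor
          · rintro (⟨h, _⟩ | ⟨h, _⟩) <;> exact h
          · intro hv
            by_cases hφ : φ v = c₁
            · exact Or.inr ⟨hv, fun h => hc12 (hφ ▸ h ▸ rfl)⟩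
            · exact Or.inl ⟨hv, hφ⟩
        have h1 := congrArg Prod.fst heq
        have h2 := congrArg Prod.snd heq
        simp only at h1 h2
        rw [← hun E₁ (by simpa using hE₁), ← hun E₂ (by simpa using hE₂), h1, h2]
    calc (G.card : ℝ) ≤ ((prj φ c₁ G).card * (prj φ c₂ G).card : ℕ) := by exact_mod_cast hcardle
      _ = ((prj φ c₁ G).card : ℝ) * ((prj φ c₂ G).card : ℝ) := by push_cast; ring
  | succ n hn ih =>
    intro R G hRcard hG
    have hnR : (0:ℝ) < (n:ℝ) := by exact_mod_cast hn
    rcases Finset.eq_empty_or_nonempty G with rfl | hGne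
    · simp only [Finset.card_empty, Nat.cast_zero]
      apply Finset.prod_nonneg
      intro c _
      exact Real.rpow_nonneg (Nat.cast_nonneg _) _
    obtain ⟨c₀, hc₀⟩ : R.Nonempty := Finset.card_pos.mp (by omega)
    set f : Finset V → Finset V := fun E => E.filter (fun v => φ v = c₀) with hf
    set t := G.image f with ht
    set L : Finset V → Finset (Finset V) :=
      fun S => (G.filter (fun E => f E = S)).image (fun E => E.filter (fun v => φ v ≠ c₀))
      with hL
    simp only [Nat.cast_add, Nat.cast_one]
    set w' : ℝ := 1/((n:ℝ)+1) with hw'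
    have hw'nn : (0:ℝ) ≤ w' := by rw [hw']; positivity
    have hfib : G.card = ∑ S ∈ t, (G.filter fun E => f E = S).card :=
      Finset.card_eq_sum_card_fiberwise (fun E hE => Finset.mem_image_of_mem f hE)
    have hkey : ∀ E : Finset V,
        E.filter (fun v => φ v = c₀) ∪ E.filter (fun v => φ v ≠ c₀) = E := by
      intro E
      ext v
      simp only [Finset.mem_union, Finset.mem_filter]
      constructor
      · rintro (⟨h, _⟩ | ⟨h, _⟩) <;> exact h
      · intro hv
        by_cases h : φ v = c₀
        · exact Or.inl ⟨hv, h⟩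
        · exact Or.inr ⟨hv, h⟩
    have hLcard : ∀ S ∈ t, (G.filter fun E => f E = S).card = (L S).card := by
      intro S _
      rw [hL]
      rw [Finset.card_image_of_injOn]
      intro E₁ h₁ E₂ h₂ heq
      have h₁' := Finset.mem_filter.mp h₁
      have h₂' := Finset.mem_filter.mp h₂
      have e1 : E₁ = S ∪ E₁.filter (fun v => φ v ≠ c₀) := by
        conv_lhs => rw [← hkey E₁]
        rw [show E₁.filter (fun v => φ v = c₀) = S from h₁'.2]
      have e2 : E₂ = S ∪ E₂.filter (fun v => φ v ≠ c₀) := by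
        conv_lhs => rw [← hkey E₂]
        rw [show E₂.filter (fun v => φ v = c₀) = S from h₂'.2]
      simp only at heq
      rw [e1, e2, heq]
    have hLedges : ∀ S ∈ t, ∀ E' ∈ L S, E'.image φ = R.erase c₀ ∧ E'.card = n + 1 := by
      intro S _ E' hE'
      rw [hL] at hE'
      obtain ⟨E, hEfil, rfl⟩ := Finset.mem_image.mp hE'
      have hEG : E ∈ G := (Finset.mem_filter.mp hEfil).1
      obtain ⟨himg, hcardE⟩ := hG E hEG
      constructor
      · exact rainbow_image_filter φ himg
      · have := rainbow_card_filter φ himg (by rw [hcardE, hRcard]) hc₀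
        omega
    have hJc : (R.erase c₀).card = n + 1 := by
      rw [Finset.card_erase_of_mem hc₀, hRcard]
      omega
    have hJne : (R.erase c₀).Nonempty := Finset.card_pos.mp (by omega)
    have hIH : ∀ S ∈ t, ((L S).card : ℝ) ≤
        ∏ c ∈ R.erase c₀, ((prj φ c (L S)).card : ℝ) ^ ((1:ℝ)/(n:ℝ)) :=
      fun S hS => ih (R.erase c₀) (L S) hJc (hLedges S hS)
    have hLsub : ∀ S, L S ⊆ prj φ c₀ G :=
      fun S => Finset.image_subset_image (Finset.filter_subset _ G)
    -- elements of members of t are colored c₀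
    have htS : ∀ S ∈ t, ∀ v ∈ S, φ v = c₀ := by
      intro S hS v hv
      obtain ⟨E, _, rfl⟩ := Finset.mem_image.mp hS
      exact (Finset.mem_filter.mp hv).2
    -- elements of members of prj φ c (L S) are not colored c₀
    have hfno : ∀ S c, ∀ f' ∈ prj φ c (L S), ∀ v ∈ f', φ v ≠ c₀ := by
      intro S c f' hf' v hv
      obtain ⟨E', hE', rfl⟩ := Finset.mem_image.mp hf'
      rw [hL] at hE'
      obtain ⟨E, _, rfl⟩ := Finset.mem_image.mp hE'
      have := (Finset.mem_filter.mp (Finset.filter_subset _ _ hv)).2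
      exact this
    have hrecov : ∀ S c, ∀ f' ∈ prj φ c (L S), (∀ v ∈ S, φ v = c₀) →
        (f' ∪ S).filter (fun v => φ v = c₀) = S := by
      intro S c f' hf' hSc
      ext v
      simp only [Finset.mem_filter, Finset.mem_union]
      constructor
      · rintro ⟨hv1 | hv2, hvc⟩
        · exact absurd hvc (hfno S c f' hf' v hv1)
        · exact hv2
      · intro hv
        exact ⟨Or.inr hv, hSc v hv⟩
    have hsum_prj : ∀ c ∈ R.erase c₀,
        ∑ S ∈ t, (prj φ c (L S)).card ≤ (prj φ c G).card := by
      intro c hc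
      have hcne : c ≠ c₀ := (Finset.mem_erase.mp hc).1
      set B := t.biUnion (fun S => (prj φ c (L S)).image (fun f' => f' ∪ S)) with hB
      have hdisj : ∀ S₁ ∈ t, ∀ S₂ ∈ t, S₁ ≠ S₂ →
          Disjoint ((prj φ c (L S₁)).image (fun f' => f' ∪ S₁))
            ((prj φ c (L S₂)).image (fun f' => f' ∪ S₂)) := by
        intro S₁ hS₁ S₂ hS₂ hne
        rw [Finset.disjoint_left]
        intro x hx₁ hx₂
        obtain ⟨f₁, hf₁, rfl⟩ := Finset.mem_image.mp hx₁
        obtain ⟨f₂, hf₂, heq⟩ := Finset.mem_image.mp hx₂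
        apply hne
        rw [← hrecov S₁ c f₁ hf₁ (htS S₁ hS₁), ← hrecov S₂ c f₂ hf₂ (htS S₂ hS₂), heq]
      have hBcard : B.card = ∑ S ∈ t, (prj φ c (L S)).card := by
        rw [hB, Finset.card_biUnion hdisj]
        apply Finset.sum_congr rfl
        intro S hS
        apply Finset.card_image_of_injOn
        intro f₁ hf₁ f₂ hf₂ heq
        have e1 : f₁ = (f₁ ∪ S).filter (fun v => φ v ≠ c₀) := by
          ext v
          simp only [Finset.mem_filter, Finset.mem_union]
          constructor
          · intro hv
            exact ⟨Or.inl hv, hfno S c f₁ hf₁ v hv⟩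
          · rintro ⟨hv1 | hv2, hvc⟩
            · exact hv1
            · exact absurd (htS S hS v hv2) hvc
        have e2 : f₂ = (f₂ ∪ S).filter (fun v => φ v ≠ c₀) := by
          ext v
          simp only [Finset.mem_filter, Finset.mem_union]
          constructor
          · intro hv
            exact ⟨Or.inl hv, hfno S c f₂ hf₂ v hv⟩
          · rintro ⟨hv1 | hv2, hvc⟩
            · exact hv1
            · exact absurd (htS S hS v hv2) hvc
        simp only at heq
        rw [e1, e2, heq]
      have hBsub : B ⊆ prj φ c G := by
        intro x hx
        obtain ⟨S, hS, hx'⟩ := Finset.mem_biUnion.mp hx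
        obtain ⟨f', hf', rfl⟩ := Finset.mem_image.mp hx'
        obtain ⟨E', hE', rfl⟩ := Finset.mem_image.mp hf'
        have hE'2 := hE'
        rw [hL] at hE'2
        obtain ⟨E, hEfil, rfl⟩ := Finset.mem_image.mp hE'2
        have hEG : E ∈ G := (Finset.mem_filter.mp hEfil).1
        have hfE : E.filter (fun v => φ v = c₀) = S := (Finset.mem_filter.mp hEfil).2
        have hxeq : (E.filter (fun v => φ v ≠ c₀)).filter (fun v => φ v ≠ c) ∪ S
            = E.filter (fun v => φ v ≠ c) := by
          ext v
          simp only [Finset.mem_union, Finset.mem_filter, ← hfE]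
          constructor
          · rintro (⟨⟨hvE, _⟩, hvc⟩ | ⟨hvE, hv0⟩)
            · exact ⟨hvE, hvc⟩
            · exact ⟨hvE, fun h => hcne (h ▸ hv0 ▸ rfl)⟩
          · rintro ⟨hvE, hvc⟩
            by_cases h0 : φ v = c₀
            · exact Or.inr ⟨hvE, h0⟩
            · exact Or.inl ⟨⟨hvE, h0⟩, hvc⟩
        rw [hxeq]
        exact Finset.mem_image_of_mem _ hEG
      calc ∑ S ∈ t, (prj φ c (L S)).card = B.card := hBcard.symm
        _ ≤ (prj φ c G).card := Finset.card_le_card hBsub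
    -- assembly
    have hperS : ∀ S ∈ t, ((L S).card : ℝ) ≤
        ((prj φ c₀ G).card : ℝ) ^ w' *
          ∏ c ∈ R.erase c₀, ((prj φ c (L S)).card : ℝ) ^ w' := by
      intro S hS
      have hone : w' + (n:ℝ)/((n:ℝ)+1) = 1 := by
        rw [hw']
        field_simp
        ring
      have hsplit : ((L S).card : ℝ)
          = ((L S).card : ℝ) ^ w' * ((L S).card : ℝ) ^ ((n:ℝ)/((n:ℝ)+1)) := by
        conv_lhs => rw [← Real.rpow_one ((L S).card : ℝ), ← hone]
        exact Real.rpow_add' (Nat.cast_nonneg _) (by rw [hone]; norm_num)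
      rw [hsplit]
      apply mul_le_mul
      · apply Real.rpow_le_rpow (Nat.cast_nonneg _) _ hw'nn
        exact_mod_cast Finset.card_le_card (hLsub S)
      · calc ((L S).card : ℝ) ^ ((n:ℝ)/((n:ℝ)+1))
            ≤ (∏ c ∈ R.erase c₀, ((prj φ c (L S)).card : ℝ) ^ ((1:ℝ)/(n:ℝ)))
              ^ ((n:ℝ)/((n:ℝ)+1)) := by
              apply Real.rpow_le_rpow (Nat.cast_nonneg _) (hIH S hS) (by positivity)
          _ = ∏ c ∈ R.erase c₀, ((prj φ c (L S)).card : ℝ) ^ w' := by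
              rw [← Real.finset_prod_rpow _ _
                (fun c _ => Real.rpow_nonneg (Nat.cast_nonneg _) _) _]
              apply Finset.prod_congr rfl
              intro c _
              rw [← Real.rpow_mul (Nat.cast_nonneg _)]
              congr 1
              rw [hw']
              field_simp
      · exact Real.rpow_nonneg (Nat.cast_nonneg _) _
      · exact Real.rpow_nonneg (Nat.cast_nonneg _) _
    calc (G.card : ℝ) = ∑ S ∈ t, ((G.filter fun E => f E = S).card : ℝ) := by
          rw [hfib]; push_cast; rfl
      _ = ∑ S ∈ t, ((L S).card : ℝ) := by
          apply Finset.sum_congr rfl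
          intro S hS
          rw [hLcard S hS]
      _ ≤ ∑ S ∈ t, (((prj φ c₀ G).card : ℝ) ^ w' *
            ∏ c ∈ R.erase c₀, ((prj φ c (L S)).card : ℝ) ^ w') :=
          Finset.sum_le_sum hperS
      _ = ((prj φ c₀ G).card : ℝ) ^ w' *
            ∑ S ∈ t, ∏ c ∈ R.erase c₀, ((prj φ c (L S)).card : ℝ) ^ w' := by
          rw [Finset.mul_sum]
      _ ≤ ((prj φ c₀ G).card : ℝ) ^ w' *
            ∏ c ∈ R.erase c₀, (∑ S ∈ t, ((prj φ c (L S)).card : ℝ)) ^ w' := by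
          apply mul_le_mul_of_nonneg_left _ (Real.rpow_nonneg (Nat.cast_nonneg _) _)
          have h := holder_finset (R.erase c₀) t
            (fun c S => ((prj φ c (L S)).card : ℝ)) hJne
            (fun c _ S _ => Nat.cast_nonneg _)
          rw [hJc] at h
          push_cast at h ⊢
          convert h using 2 <;> rw [hw']
      _ ≤ ((prj φ c₀ G).card : ℝ) ^ w' *
            ∏ c ∈ R.erase c₀, ((prj φ c G).card : ℝ) ^ w' := by
          apply mul_le_mul_of_nonneg_left _ (Real.rpow_nonneg (Nat.cast_nonneg _) _)
          apply Finset.prod_le_prod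
          · intro c _
            exact Real.rpow_nonneg (Finset.sum_nonneg fun _ _ => Nat.cast_nonneg _) _
          · intro c hc
            apply Real.rpow_le_rpow (Finset.sum_nonneg fun _ _ => Nat.cast_nonneg _) _ hw'nn
            exact_mod_cast hsum_prj c hc
      _ = ∏ c ∈ R, ((prj φ c G).card : ℝ) ^ w' :=
          Finset.mul_prod_erase R (fun c => ((prj φ c G).card : ℝ) ^ w') hc₀

end LW


theorem single_step {V : Type*} [Fintype V] [DecidableEq V] {k : ℕ} (φ : V → Fin k)
    (n : ℕ) (hn : 1 ≤ n) (hnk : n + 1 ≤ k)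
    (G : Finset (Finset V)) (hGc : ∀ E ∈ G, E.card = n + 1)
    (hGp : ∀ E ∈ G, Set.InjOn φ ↑E) :
    (G.card : ℝ) ≤ (k.choose (n+1) : ℝ) *
      ((((Finset.univ : Finset (Finset V)).filter
          (fun f => f.card = n ∧ ∃ E ∈ G, f ⊆ E)).card : ℝ) / (k.choose n : ℝ))
        ^ (((n:ℝ)+1)/(n:ℝ)) := by
  classical
  set DG := (Finset.univ : Finset (Finset V)).filter
      (fun f => f.card = n ∧ ∃ E ∈ G, f ⊆ E) with hDG
  set g : Finset (Fin k) → ℝ :=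
    fun Q => ((DG.filter (fun f => f.image φ = Q)).card : ℝ) with hg
  have hrain : ∀ f ∈ DG, (f.image φ).card = n := by
    intro f hf
    obtain ⟨-, hfc, E, hEG, hfE⟩ := Finset.mem_filter.mp hf
    rw [Finset.card_image_of_injOn ((hGp E hEG).mono (by exact_mod_cast hfE)), hfc]
  have hgnn : ∀ Q, 0 ≤ g Q := fun Q => Nat.cast_nonneg _
  have hsupp : ∀ Q : Finset (Fin k), Q.card ≠ n → g Q = 0 := by
    intro Q hQ
    rw [hg]
    norm_num
    intro f hf heq
    exact hQ (by rw [← heq, hrain f hf])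
  have hGfib : G.card
      = ∑ R ∈ Finset.powersetCard (n+1) (Finset.univ : Finset (Fin k)),
          (G.filter (fun E => E.image φ = R)).card := by
    apply Finset.card_eq_sum_card_fiberwise
    intro E hE
    rw [Finset.mem_coe, Finset.mem_powersetCard_univ]
    rw [Finset.card_image_of_injOn (hGp E hE), hGc E hE]
  have hDGfib : DG.card
      = ∑ Q ∈ Finset.powersetCard n (Finset.univ : Finset (Fin k)),
          (DG.filter (fun f => f.image φ = Q)).card := by
    apply Finset.card_eq_sum_card_fiberwise
    intro f hf
    rw [Finset.mem_coe, Finset.mem_powersetCard_univ]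
    exact hrain f hf
  have hperR : ∀ R ∈ Finset.powersetCard (n+1) (Finset.univ : Finset (Fin k)),
      ((G.filter (fun E => E.image φ = R)).card : ℝ) ≤ tF n g R := by
    intro R hR
    have hRcard := Finset.mem_powersetCard_univ.mp hR
    set GR := G.filter (fun E => E.image φ = R) with hGR
    have hedge : ∀ E ∈ GR, E.image φ = R ∧ E.card = n + 1 := by
      intro E hE
      obtain ⟨hEG, himg⟩ := Finset.mem_filter.mp hE
      exact ⟨himg, hGc E hEG⟩
    have hlw := loomis_whitney φ n hn R GR hRcard hedge
    refine hlw.trans ?_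
    unfold tF
    apply Finset.prod_le_prod
    · intro c _
      exact Real.rpow_nonneg (Nat.cast_nonneg _) _
    · intro c hc
      apply Real.rpow_le_rpow (Nat.cast_nonneg _) _ (by positivity)
    -- prj φ c GR ⊆ DG.filter (image = R.erase c)
      have hsub : prj φ c GR ⊆ DG.filter (fun f => f.image φ = R.erase c) := by
        intro f' hf'
        obtain ⟨E, hE, rfl⟩ := Finset.mem_image.mp hf'
        obtain ⟨himg, hcardE⟩ := hedge E hE
        have hEG : E ∈ G := (Finset.mem_filter.mp hE).1
        have hcf := rainbow_card_filter φ himg (by rw [hcardE, hRcard]) hc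
        rw [Finset.mem_filter]
        refine ⟨Finset.mem_filter.mpr ⟨Finset.mem_univ _, ?_, E, hEG, Finset.filter_subset _ _⟩, ?_⟩
        · omega
        · exact rainbow_image_filter φ himg
      have := Finset.card_le_card hsub
      show (_ : ℝ) ≤ ((DG.filter (fun f => f.image φ = R.erase c)).card : ℝ)
      exact_mod_cast this
  have hcast : ∀ m : ℕ, ((Fintype.card (Fin k)).choose m : ℝ) = (k.choose m : ℝ) := by
    intro m
    rw [Fintype.card_fin]
  calc (G.card : ℝ)
      = ∑ R ∈ Finset.powersetCard (n+1) (Finset.univ : Finset (Fin k)),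
          ((G.filter (fun E => E.image φ = R)).card : ℝ) := by
        rw [hGfib]; push_cast; rfl
    _ ≤ FF n g := Finset.sum_le_sum hperR
    _ ≤ ((Fintype.card (Fin k)).choose (n+1) : ℝ) *
          ((∑ Q ∈ Finset.powersetCard n (Finset.univ : Finset (Fin k)), g Q)
            / ((Fintype.card (Fin k)).choose n : ℝ)) ^ (((n:ℝ)+1)/(n:ℝ)) := by
        apply M_ineq n hn (by rw [Fintype.card_fin]; exact hnk) g hgnn hsupp
    _ = (k.choose (n+1) : ℝ) * ((DG.card : ℝ) / (k.choose n : ℝ)) ^ (((n:ℝ)+1)/(n:ℝ)) := by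
        rw [hcast, hcast]
        congr 2
        rw [hDGfib]
        push_cast
        rfl


end FFK


/-- Frankl–Füredi–Kalai Kruskal–Katona-type theorem for k-partite r-graphs:
(|H|/C(k,r))^{1/r} ≤ (|∂_i H|/C(k,r-i))^{1/(r-i)}. -/
theorem stmt19 {V : Type*} [Fintype V] [DecidableEq V] (k r i : ℕ)
    (hi : 1 ≤ i) (hir : i < r) (hrk : r ≤ k)
    (H : Finset (Finset V)) (hcard : ∀ E ∈ H, E.card = r)
    (φ : V → Fin k) (hpart : ∀ E ∈ H, Set.InjOn φ ↑E) :
    ((H.card : ℝ) / (k.choose r : ℝ)) ^ ((1 : ℝ) / (r : ℝ)) ≤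
    ((((Finset.univ : Finset (Finset V)).filter
        (fun f => f.card = r - i ∧ ∃ E ∈ H, f ⊆ E)).card : ℝ) / (k.choose (r - i) : ℝ))
      ^ ((1 : ℝ) / ((r - i : ℕ) : ℝ)) := by
  classical
  set Sh : ℕ → Finset (Finset V) := fun j => (Finset.univ : Finset (Finset V)).filter
      (fun f => f.card = r - j ∧ ∃ E ∈ H, f ⊆ E) with hSh
  have hSh0 : Sh 0 = H := by
    rw [hSh]
    ext E
    simp only [Finset.mem_filter, Finset.mem_univ, true_and, Nat.sub_zero]
    constructor
    · rintro ⟨hc, E', hE', hsub⟩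
      rwa [Finset.eq_of_subset_of_card_le hsub (by rw [hcard E' hE', hc])]
    · intro hE
      exact ⟨hcard E hE, E, hE, Finset.Subset.refl E⟩
  have hShprops : ∀ j, ∀ f ∈ Sh j, f.card = r - j ∧ Set.InjOn φ ↑f := by
    intro j f hf
    obtain ⟨-, hc, E, hE, hsub⟩ := Finset.mem_filter.mp hf
    exact ⟨hc, (hpart E hE).mono (by exact_mod_cast hsub)⟩
  have hstep : ∀ j, j < i → (Finset.univ : Finset (Finset V)).filter
      (fun f => f.card = r - (j+1) ∧ ∃ E ∈ Sh j, f ⊆ E) = Sh (j+1) := by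
    intro j hj
    ext f
    simp only [hSh, Finset.mem_filter, Finset.mem_univ, true_and]
    constructor
    · rintro ⟨hc, E, ⟨hcE, E', hE', hsubE⟩, hsub⟩
      exact ⟨hc, E', hE', hsub.trans hsubE⟩
    · rintro ⟨hc, E, hE, hsub⟩
      have hcE : E.card = r := hcard E hE
      have h1 : 1 + f.card ≤ E.card := by omega
      obtain ⟨u, hfu, huE, hucard⟩ := Finset.exists_subsuperset_card_eq hsub (n := 1 + f.card) (by omega) h1
      exact ⟨hc, u, ⟨by omega, E, hE, huE⟩, hfu⟩
  have hmono : ∀ j, j < i →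
      (((Sh j).card : ℝ) / (k.choose (r - j) : ℝ)) ^ ((1:ℝ)/((r - j : ℕ) : ℝ))
      ≤ (((Sh (j+1)).card : ℝ) / (k.choose (r - (j+1)) : ℝ))
          ^ ((1:ℝ)/((r - (j+1) : ℕ) : ℝ)) := by
    intro j hj
    have hn1 : 1 ≤ r - (j+1) := by omega
    have hnk : (r - (j+1)) + 1 ≤ k := by omega
    have hrj : r - j = (r - (j+1)) + 1 := by omega
    set n := r - (j+1) with hn
    have hss := FFK.single_step φ n hn1 hnk (Sh j)
      (fun E hE => by rw [(hShprops j E hE).1, hrj])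
      (fun E hE => (hShprops j E hE).2)
    rw [hstep j hj] at hss
    have hC1 : (0:ℝ) < (k.choose (n+1) : ℝ) := by
      exact_mod_cast Nat.choose_pos (by omega)
    have hCn : (0:ℝ) < (k.choose n : ℝ) := by
      exact_mod_cast Nat.choose_pos (by omega)
    have hnR : (0:ℝ) < (n:ℝ) := by exact_mod_cast hn1
    have hX : (0:ℝ) ≤ ((Sh (j+1)).card : ℝ) / (k.choose n : ℝ) := by positivity
    have hdiv : ((Sh j).card : ℝ) / (k.choose (n+1) : ℝ)
        ≤ (((Sh (j+1)).card : ℝ) / (k.choose n : ℝ)) ^ (((n:ℝ)+1)/(n:ℝ)) := by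
      rw [div_le_iff₀ hC1]
      calc ((Sh j).card : ℝ) ≤ _ := hss
        _ = _ := by ring
    have hfinal := Real.rpow_le_rpow (by positivity) hdiv (by positivity :
        (0:ℝ) ≤ 1/((n:ℝ)+1))
    rw [← Real.rpow_mul hX] at hfinal
    rw [show (((n:ℝ)+1)/(n:ℝ)) * (1/((n:ℝ)+1)) = 1/(n:ℝ) by field_simp] at hfinal
    rw [hrj]
    push_cast
    exact hfinal
  have hchain : ∀ j, j ≤ i →
      (((Sh 0).card : ℝ) / (k.choose (r - 0) : ℝ)) ^ ((1:ℝ)/((r - 0 : ℕ) : ℝ))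
      ≤ (((Sh j).card : ℝ) / (k.choose (r - j) : ℝ)) ^ ((1:ℝ)/((r - j : ℕ) : ℝ)) := by
    intro j
    induction j with
    | zero => intro _; exact le_rfl
    | succ j ihj =>
      intro hle
      exact (ihj (by omega)).trans (hmono j (by omega))
  have hfin := hchain i le_rfl
  rw [hSh0] at hfin
  have hunfold : Sh i = (Finset.univ : Finset (Finset V)).filter
      (fun f => f.card = r - i ∧ ∃ E ∈ H, f ⊆ E) := rfl
  rw [hunfold] at hfin
  simpa using hfin
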